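/- Let q₁, q₂ be complex polynomials with deg q₁ = deg q₂ = d ≥ 2, and define F : ℂ × ℂ → ℂ × ℂ by F(w₁, w₂) = (q₁.eval w₁, q₂.eval w₂). Then J₂(F) = (J(q₁) ×ˢ K(q₂)) ∪ (K(q₁) ×ˢ J(q₂)), where for a complex polynomial p, K(p) := {z ∈ ℂ : the orbit (p^[n](z))_{n∈ℕ} is bounded} is its filled-in Julia set and J(p) := {z ∈ ℂ : the family of iterates {p^[n] : n ∈ ℕ} is not normal (general sense) at z} is its Julia set. -/

import Mathlib

/-- A family `F : ι → α → E` of functions into a normed space is normal in the general sense on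
a set `U` if every sequence in the family has a subsequence which either converges uniformly on
every compact subset of `U` to a limit function, or diverges uniformly to `∞` on every compact
subset of `U`. -/
def NormalGenOn {α E ι : Type*} [TopologicalSpace α] [NormedAddCommGroup E]
    (F : ι → α → E) (U : Set α) : Prop :=
  ∀ u : ℕ → ι, ∃ φ : ℕ → ℕ, StrictMono φ ∧
    ((∃ f : α → E, ∀ K : Set α, K ⊆ U → IsCompact K →
        TendstoUniformlyOn (fun n => F (u (φ n))) f Filter.atTop K) ∨
     (∀ K : Set α, K ⊆ U → IsCompact K → ∀ M : ℝ, 0 < M →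
        ∀ᶠ n in Filter.atTop, ∀ z ∈ K, M ≤ ‖F (u (φ n)) z‖))

/-- A family is normal in the general sense at a point if it is normal in the general sense on
some open neighborhood of that point. -/
def NormalGenAt {α E ι : Type*} [TopologicalSpace α] [NormedAddCommGroup E]
    (F : ι → α → E) (z : α) : Prop :=
  ∃ U : Set α, IsOpen U ∧ z ∈ U ∧ NormalGenOn F U

/-- The Julia set of a self-map `G` of a normed space: the set of points at which the family of
iterates `{G^[n] : n ∈ ℕ}` is not normal in the general sense. -/
def juliaSet {E : Type*} [NormedAddCommGroup E] (G : E → E) : Set E :=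
  {z | ¬ NormalGenAt (fun n : ℕ => G^[n]) z}

/-- The filled-in Julia set of a self-map `G` of a normed space: the set of points with bounded
orbit under `G`. -/
def filledJuliaSet {E : Type*} [NormedAddCommGroup E] (G : E → E) : Set E :=
  {z | Bornology.IsBounded (Set.range fun n : ℕ => G^[n] z)}

open Filter Set

section Aux

/-- A subsequence of a uniformly convergent (on a set) sequence converges uniformly. -/
lemma tuo_comp {α β : Type*} [UniformSpace β] {F : ℕ → α → β} {f : α → β} {s : Set α}
    (h : TendstoUniformlyOn F f atTop s) {ψ : ℕ → ℕ} (hψ : Tendsto ψ atTop atTop) :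
    TendstoUniformlyOn (fun n => F (ψ n)) f atTop s :=
  fun u hu => hψ.eventually (h u hu)

/-- If the index sequence is constant along `φ`, the corresponding subfamily converges
uniformly (being constant). -/
lemma tuo_of_const_index {α β : Type*} [UniformSpace β] (F : ℕ → α → β) {u φ : ℕ → ℕ} {c : ℕ}
    (hc : ∀ n, u (φ n) = c) (s : Set α) :
    TendstoUniformlyOn (fun n => F (u (φ n))) (F c) atTop s := by
  intro v hv
  refine Filter.Eventually.of_forall fun n x _ => ?_
  show (F c x, F (u (φ n)) x) ∈ v
  rw [hc n]
  exact refl_mem_uniformity hv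

/-- Every sequence of naturals admits a strictly monotone subsequence along which it is
constant, or else tends to infinity. -/
lemma nat_seq_dichotomy (u : ℕ → ℕ) :
    (∃ φ : ℕ → ℕ, StrictMono φ ∧ ∃ c, ∀ n, u (φ n) = c) ∨ Tendsto u atTop atTop := by
  by_cases h : ∃ c, ∃ᶠ n in atTop, u n = c
  · obtain ⟨c, hc⟩ := h
    obtain ⟨φ, hφ, hc'⟩ := Filter.extraction_of_frequently_atTop hc
    exact Or.inl ⟨φ, hφ, c, hc'⟩
  · push_neg at h
    right
    refine tendsto_atTop.2 fun b => ?_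
    have h' : ∀ c, ∀ᶠ n in atTop, u n ≠ c := by
      intro c
      have := h c
      simpa using this
    induction b with
    | zero => exact Filter.Eventually.of_forall fun n => Nat.zero_le _
    | succ b ih =>
      filter_upwards [ih, h' b] with n h1 h2
      omega

/-- Iterates of a product map are products of iterates. -/
lemma iterate_prod (f g : ℂ → ℂ) (n : ℕ) (w : ℂ × ℂ) :
    (fun p : ℂ × ℂ => (f p.1, g p.2))^[n] w = (f^[n] w.1, g^[n] w.2) := by
  induction n with
  | zero => rfl
  | succ n ih =>
    rw [Function.iterate_succ_apply', Function.iterate_succ_apply',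
      Function.iterate_succ_apply', ih]

/-- A polynomial of degree at least 2 eventually doubles the norm. -/
lemma poly_growth (q : Polynomial ℂ) (hd : 2 ≤ q.natDegree) :
    ∃ R : ℝ, 1 ≤ R ∧ ∀ z : ℂ, R ≤ ‖z‖ → 2 * ‖z‖ ≤ ‖q.eval z‖ := by
  obtain ⟨d, hdd⟩ : ∃ d, q.natDegree = d := ⟨_, rfl⟩
  rw [hdd] at hd
  have hq0 : q ≠ 0 := by
    intro h
    rw [h, Polynomial.natDegree_zero] at hdd
    omega
  have ha : (0 : ℝ) < ‖q.coeff d‖ := by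
    rw [norm_pos_iff, ← hdd]
    exact Polynomial.leadingCoeff_ne_zero.2 hq0
  set S : ℝ := ∑ i ∈ Finset.range d, ‖q.coeff i‖ with hS
  have hS0 : 0 ≤ S := Finset.sum_nonneg fun i _ => norm_nonneg _
  refine ⟨max 1 ((S + 2) / ‖q.coeff d‖), le_max_left _ _, fun z hz => ?_⟩
  have h1 : 1 ≤ ‖z‖ := le_trans (le_max_left _ _) hz
  have h2 : S + 2 ≤ ‖q.coeff d‖ * ‖z‖ := by
    have := le_trans (le_max_right _ _) hz
    rw [div_le_iff₀ ha] at this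
    linarith [this]
  have heval : q.eval z = (∑ i ∈ Finset.range d, q.coeff i * z ^ i) + q.coeff d * z ^ d := by
    rw [Polynomial.eval_eq_sum_range, hdd, Finset.sum_range_succ]
  set T : ℂ := ∑ i ∈ Finset.range d, q.coeff i * z ^ i with hT
  have hTle : ‖T‖ ≤ S * ‖z‖ ^ (d - 1) := by
    calc ‖T‖ ≤ ∑ i ∈ Finset.range d, ‖q.coeff i * z ^ i‖ := norm_sum_le _ _
      _ = ∑ i ∈ Finset.range d, ‖q.coeff i‖ * ‖z‖ ^ i := by
          simp [norm_mul, norm_pow]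
      _ ≤ ∑ i ∈ Finset.range d, ‖q.coeff i‖ * ‖z‖ ^ (d - 1) := by
          refine Finset.sum_le_sum fun i hi => ?_
          refine mul_le_mul_of_nonneg_left ?_ (norm_nonneg _)
          refine pow_le_pow_right₀ h1 ?_
          have := Finset.mem_range.1 hi
          omega
      _ = S * ‖z‖ ^ (d - 1) := by rw [← Finset.sum_mul]
  have hlow : ‖q.coeff d * z ^ d‖ - ‖T‖ ≤ ‖q.eval z‖ := by
    have h3 : ‖q.coeff d * z ^ d‖ ≤ ‖q.eval z‖ + ‖T‖ := by
      calc ‖q.coeff d * z ^ d‖ = ‖(T + q.coeff d * z ^ d) + (-T)‖ := by ring_nf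
        _ ≤ ‖T + q.coeff d * z ^ d‖ + ‖(-T)‖ := norm_add_le _ _
        _ = ‖q.eval z‖ + ‖T‖ := by rw [heval, norm_neg]
    linarith
  have hzd : ‖z‖ ^ d = ‖z‖ ^ (d - 1) * ‖z‖ := by
    have h5 : d - 1 + 1 = d := by omega
    conv_lhs => rw [← h5]
    rw [pow_succ]
  have hpow1 : ‖z‖ ≤ ‖z‖ ^ (d - 1) := by
    calc ‖z‖ = ‖z‖ ^ 1 := (pow_one _).symm
      _ ≤ ‖z‖ ^ (d - 1) := pow_le_pow_right₀ h1 (by omega)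
  have hpos : (0 : ℝ) ≤ ‖z‖ ^ (d - 1) := pow_nonneg (norm_nonneg _) _
  calc 2 * ‖z‖ ≤ 2 * ‖z‖ ^ (d - 1) := by linarith
    _ ≤ (‖q.coeff d‖ * ‖z‖ - S) * ‖z‖ ^ (d - 1) := by
        refine mul_le_mul_of_nonneg_right ?_ hpos
        linarith
    _ = ‖q.coeff d‖ * ‖z‖ ^ d - S * ‖z‖ ^ (d - 1) := by rw [hzd]; ring
    _ ≤ ‖q.coeff d * z ^ d‖ - ‖T‖ := by
        rw [norm_mul, norm_pow]
        linarith
    _ ≤ ‖q.eval z‖ := hlow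

/-- Escape lemma: near a point with unbounded orbit, the iterates of a polynomial of
degree at least 2 diverge uniformly to infinity on a whole open neighborhood. -/
lemma escape_unif (q : Polynomial ℂ) (hd : 2 ≤ q.natDegree) {z : ℂ}
    (hz : z ∉ filledJuliaSet (fun w : ℂ => q.eval w)) :
    ∃ V : Set ℂ, IsOpen V ∧ z ∈ V ∧
      ∀ M : ℝ, ∀ᶠ n in atTop, ∀ w ∈ V, M ≤ ‖(fun w : ℂ => q.eval w)^[n] w‖ := by
  obtain ⟨R, hR1, hR⟩ := poly_growth q hd
  set g : ℂ → ℂ := fun w => q.eval w with hg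
  have hcont : Continuous g := q.continuous
  have hR0 : (0 : ℝ) < R := lt_of_lt_of_le one_pos hR1
  have key : ∀ w : ℂ, R ≤ ‖w‖ → ∀ n, (2 : ℝ) ^ n * R ≤ ‖g^[n] w‖ := by
    intro w hw n
    induction n with
    | zero => simpa using hw
    | succ n ih =>
      have h2n : (1 : ℝ) ≤ 2 ^ n := one_le_pow₀ one_le_two
      have h1 : R ≤ ‖g^[n] w‖ := by nlinarith
      have h2 := hR (g^[n] w) h1
      rw [Function.iterate_succ_apply']
      calc (2 : ℝ) ^ (n + 1) * R = 2 * ((2 : ℝ) ^ n * R) := by ring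
        _ ≤ 2 * ‖g^[n] w‖ := by linarith
        _ ≤ ‖g (g^[n] w)‖ := h2
  have hnb : ¬ ∃ C, ∀ x ∈ Set.range (fun n : ℕ => g^[n] z), ‖x‖ ≤ C := by
    intro hC
    exact hz (isBounded_iff_forall_norm_le.2 hC)
  push_neg at hnb
  obtain ⟨x, hxmem, hxR⟩ := hnb R
  obtain ⟨N, rfl⟩ := hxmem
  refine ⟨(fun w => g^[N] w) ⁻¹' {w | R < ‖w‖},
    (isOpen_lt continuous_const continuous_norm).preimage (hcont.iterate N), hxR, ?_⟩
  intro M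
  obtain ⟨k, hk⟩ := pow_unbounded_of_one_lt M (one_lt_two (α := ℝ))
  rw [eventually_atTop]
  refine ⟨N + k, fun n hn w hw => ?_⟩
  have hw' : R ≤ ‖g^[N] w‖ := le_of_lt hw
  have h3 := key (g^[N] w) hw' (n - N)
  rw [← Function.iterate_add_apply] at h3
  have hnn : n - N + N = n := by omega
  rw [hnn] at h3
  have h4 : (2 : ℝ) ^ k ≤ 2 ^ (n - N) := pow_le_pow_right₀ one_le_two (by omega)
  calc M ≤ 2 ^ k := le_of_lt hk
    _ ≤ 2 ^ (n - N) := h4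
    _ = 2 ^ (n - N) * 1 := (mul_one _).symm
    _ ≤ 2 ^ (n - N) * R := by
        refine mul_le_mul_of_nonneg_left hR1 ?_
        positivity
    _ ≤ ‖g^[n] w‖ := h3

/-- If both coordinate families are normal at the respective points, the product family is
normal at the pair. -/
lemma not_julia_prod {G₁ G₂ : ℂ → ℂ} {z₁ z₂ : ℂ}
    (h1 : z₁ ∉ juliaSet G₁) (h2 : z₂ ∉ juliaSet G₂) :
    (z₁, z₂) ∉ juliaSet (fun w : ℂ × ℂ => (G₁ w.1, G₂ w.2)) := by
  simp only [juliaSet, mem_setOf_eq, not_not] at *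
  obtain ⟨U₁, hU₁o, hz₁, hN₁⟩ := h1
  obtain ⟨U₂, hU₂o, hz₂, hN₂⟩ := h2
  refine ⟨U₁ ×ˢ U₂, hU₁o.prod hU₂o, ⟨hz₁, hz₂⟩, ?_⟩
  intro u
  obtain ⟨φ₁, hφ₁, H₁⟩ := hN₁ u
  obtain ⟨φ₂, hφ₂, H₂⟩ := hN₂ (u ∘ φ₁)
  have hφ₂t : Tendsto φ₂ atTop atTop := hφ₂.tendsto_atTop
  refine ⟨φ₁ ∘ φ₂, hφ₁.comp hφ₂, ?_⟩
  rcases H₂ with ⟨f₂, hf₂⟩ | hdiv₂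
  · rcases H₁ with ⟨f₁, hf₁⟩ | hdiv₁
    · left
      refine ⟨fun w => (f₁ w.1, f₂ w.2), fun K hK hKc => ?_⟩
      have hK₁ : Prod.fst '' K ⊆ U₁ := by rintro _ ⟨w, hw, rfl⟩; exact (hK hw).1
      have hK₂ : Prod.snd '' K ⊆ U₂ := by rintro _ ⟨w, hw, rfl⟩; exact (hK hw).2
      have h₁' := tuo_comp (hf₁ _ hK₁ (hKc.image continuous_fst)) hφ₂t
      have h₂' := hf₂ _ hK₂ (hKc.image continuous_snd)
      rw [Metric.tendstoUniformlyOn_iff] at h₁' h₂' ⊢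
      intro ε hε
      filter_upwards [h₁' ε hε, h₂' ε hε] with n hn₁ hn₂ w hw
      have e := iterate_prod G₁ G₂ (u ((φ₁ ∘ φ₂) n)) w
      calc dist ((fun w : ℂ × ℂ => (f₁ w.1, f₂ w.2)) w)
            ((fun w : ℂ × ℂ => (G₁ w.1, G₂ w.2))^[u ((φ₁ ∘ φ₂) n)] w)
          = dist ((f₁ w.1, f₂ w.2) : ℂ × ℂ)
            ((G₁^[u ((φ₁ ∘ φ₂) n)] w.1, G₂^[u ((φ₁ ∘ φ₂) n)] w.2) : ℂ × ℂ) := by rw [e]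
        _ = max (dist (f₁ w.1) (G₁^[u ((φ₁ ∘ φ₂) n)] w.1))
            (dist (f₂ w.2) (G₂^[u ((φ₁ ∘ φ₂) n)] w.2)) := Prod.dist_eq
        _ < ε := max_lt (hn₁ w.1 ⟨w, hw, rfl⟩) (hn₂ w.2 ⟨w, hw, rfl⟩)
    · right
      intro K hK hKc M hM
      have hK₁ : Prod.fst '' K ⊆ U₁ := by rintro _ ⟨w, hw, rfl⟩; exact (hK hw).1
      have hd := hdiv₁ (Prod.fst '' K) hK₁ (hKc.image continuous_fst) M hM
      filter_upwards [hφ₂t.eventually hd] with n hn w hw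
      calc M ≤ ‖G₁^[u ((φ₁ ∘ φ₂) n)] w.1‖ := hn w.1 ⟨w, hw, rfl⟩
        _ ≤ ‖(fun w : ℂ × ℂ => (G₁ w.1, G₂ w.2))^[u ((φ₁ ∘ φ₂) n)] w‖ := by
            rw [iterate_prod]
            exact norm_fst_le ((G₁^[u ((φ₁ ∘ φ₂) n)] w.1, G₂^[u ((φ₁ ∘ φ₂) n)] w.2) : ℂ × ℂ)
  · right
    intro K hK hKc M hM
    have hK₂ : Prod.snd '' K ⊆ U₂ := by rintro _ ⟨w, hw, rfl⟩; exact (hK hw).2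
    have hd := hdiv₂ (Prod.snd '' K) hK₂ (hKc.image continuous_snd) M hM
    filter_upwards [hd] with n hn w hw
    calc M ≤ ‖G₂^[u ((φ₁ ∘ φ₂) n)] w.2‖ := hn w.2 ⟨w, hw, rfl⟩
      _ ≤ ‖(fun w : ℂ × ℂ => (G₁ w.1, G₂ w.2))^[u ((φ₁ ∘ φ₂) n)] w‖ := by
          rw [iterate_prod]
          exact norm_snd_le ((G₁^[u ((φ₁ ∘ φ₂) n)] w.1, G₂^[u ((φ₁ ∘ φ₂) n)] w.2) : ℂ × ℂ)

/-- If the first coordinate has unbounded orbit, the product family is normal at the pair. -/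
lemma not_julia_escape_fst (q : Polynomial ℂ) (hd : 2 ≤ q.natDegree) {z₁ : ℂ} (z₂ : ℂ)
    (G₂ : ℂ → ℂ) (h : z₁ ∉ filledJuliaSet (fun w : ℂ => q.eval w)) :
    (z₁, z₂) ∉ juliaSet (fun w : ℂ × ℂ => (q.eval w.1, G₂ w.2)) := by
  obtain ⟨V, hVo, hzV, hV⟩ := escape_unif q hd h
  simp only [juliaSet, mem_setOf_eq, not_not]
  refine ⟨V ×ˢ (univ : Set ℂ), hVo.prod isOpen_univ, ⟨hzV, mem_univ _⟩, ?_⟩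
  intro u
  rcases nat_seq_dichotomy u with ⟨φ, hφ, c, hc⟩ | hu
  · exact ⟨φ, hφ, Or.inl ⟨(fun w : ℂ × ℂ => (q.eval w.1, G₂ w.2))^[c],
      fun K _ _ => tuo_of_const_index (fun n => (fun w : ℂ × ℂ => (q.eval w.1, G₂ w.2))^[n]) hc K⟩⟩
  · refine ⟨id, strictMono_id, Or.inr ?_⟩
    intro K hK _ M hM
    filter_upwards [hu.eventually (hV M)] with n hn w hw
    calc M ≤ ‖(fun w : ℂ => q.eval w)^[u (id n)] w.1‖ := hn w.1 (hK hw).1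
      _ ≤ ‖(fun w : ℂ × ℂ => (q.eval w.1, G₂ w.2))^[u (id n)] w‖ := by
          rw [iterate_prod (fun w : ℂ => q.eval w) G₂]
          exact norm_fst_le (((fun w : ℂ => q.eval w)^[u (id n)] w.1, G₂^[u (id n)] w.2) : ℂ × ℂ)

/-- If the second coordinate has unbounded orbit, the product family is normal at the pair. -/
lemma not_julia_escape_snd (q : Polynomial ℂ) (hd : 2 ≤ q.natDegree) (z₁ : ℂ) {z₂ : ℂ}
    (G₁ : ℂ → ℂ) (h : z₂ ∉ filledJuliaSet (fun w : ℂ => q.eval w)) :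
    (z₁, z₂) ∉ juliaSet (fun w : ℂ × ℂ => (G₁ w.1, q.eval w.2)) := by
  obtain ⟨V, hVo, hzV, hV⟩ := escape_unif q hd h
  simp only [juliaSet, mem_setOf_eq, not_not]
  refine ⟨(univ : Set ℂ) ×ˢ V, isOpen_univ.prod hVo, ⟨mem_univ _, hzV⟩, ?_⟩
  intro u
  rcases nat_seq_dichotomy u with ⟨φ, hφ, c, hc⟩ | hu
  · exact ⟨φ, hφ, Or.inl ⟨(fun w : ℂ × ℂ => (G₁ w.1, q.eval w.2))^[c],
      fun K _ _ => tuo_of_const_index (fun n => (fun w : ℂ × ℂ => (G₁ w.1, q.eval w.2))^[n]) hc K⟩⟩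
  · refine ⟨id, strictMono_id, Or.inr ?_⟩
    intro K hK _ M hM
    filter_upwards [hu.eventually (hV M)] with n hn w hw
    calc M ≤ ‖(fun w : ℂ => q.eval w)^[u (id n)] w.2‖ := hn w.2 (hK hw).2
      _ ≤ ‖(fun w : ℂ × ℂ => (G₁ w.1, q.eval w.2))^[u (id n)] w‖ := by
          rw [iterate_prod G₁ (fun w : ℂ => q.eval w)]
          exact norm_snd_le ((G₁^[u (id n)] w.1, (fun w : ℂ => q.eval w)^[u (id n)] w.2) : ℂ × ℂ)

/-- If the product family is normal at a pair whose second coordinate has bounded orbit,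
the first coordinate family is normal at the first coordinate. -/
lemma normal_fst_of_prod {G₁ G₂ : ℂ → ℂ} {z₁ z₂ : ℂ}
    (hb : z₂ ∈ filledJuliaSet G₂)
    (h : (z₁, z₂) ∉ juliaSet (fun w : ℂ × ℂ => (G₁ w.1, G₂ w.2))) :
    z₁ ∉ juliaSet G₁ := by
  simp only [juliaSet, mem_setOf_eq, not_not] at *
  obtain ⟨U, hUo, hzU, hN⟩ := h
  have hb' : Bornology.IsBounded (Set.range fun n : ℕ => G₂^[n] z₂) := hb
  obtain ⟨C, hC⟩ := isBounded_iff_forall_norm_le.1 hb'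
  have hC0 : ∀ n : ℕ, ‖G₂^[n] z₂‖ ≤ C := fun n => hC _ ⟨n, rfl⟩
  have hcont : Continuous fun w : ℂ => ((w, z₂) : ℂ × ℂ) := continuous_id.prodMk continuous_const
  refine ⟨{w : ℂ | ((w, z₂) : ℂ × ℂ) ∈ U}, hUo.preimage hcont, hzU, ?_⟩
  intro u
  obtain ⟨φ, hφ, H⟩ := hN u
  refine ⟨φ, hφ, ?_⟩
  rcases H with ⟨f, hf⟩ | hdiv
  · left
    refine ⟨fun w => (f ((w, z₂) : ℂ × ℂ)).1, fun K hK hKc => ?_⟩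
    have hK' : (fun w : ℂ => ((w, z₂) : ℂ × ℂ)) '' K ⊆ U := by
      rintro _ ⟨w, hw, rfl⟩; exact hK hw
    have hKc' : IsCompact ((fun w : ℂ => ((w, z₂) : ℂ × ℂ)) '' K) := hKc.image hcont
    have hf' := hf _ hK' hKc'
    rw [Metric.tendstoUniformlyOn_iff] at hf' ⊢
    intro ε hε
    filter_upwards [hf' ε hε] with n hn w hw
    have h2 := hn ((w, z₂) : ℂ × ℂ) ⟨w, hw, rfl⟩
    rw [iterate_prod] at h2
    calc dist (f ((w, z₂) : ℂ × ℂ)).1 (G₁^[u (φ n)] w)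
        ≤ dist (f ((w, z₂) : ℂ × ℂ))
            ((G₁^[u (φ n)] w, G₂^[u (φ n)] z₂) : ℂ × ℂ) := by
          rw [Prod.dist_eq]; exact le_max_left _ _
      _ < ε := h2
  · right
    intro K hK hKc M hM
    have hK' : (fun w : ℂ => ((w, z₂) : ℂ × ℂ)) '' K ⊆ U := by
      rintro _ ⟨w, hw, rfl⟩; exact hK hw
    have hKc' : IsCompact ((fun w : ℂ => ((w, z₂) : ℂ × ℂ)) '' K) := hKc.image hcont
    have hM' : 0 < max M (C + 1) := lt_of_lt_of_le hM (le_max_left _ _)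
    filter_upwards [hdiv _ hK' hKc' _ hM'] with n hn w hw
    have h2 := hn ((w, z₂) : ℂ × ℂ) ⟨w, hw, rfl⟩
    rw [iterate_prod, Prod.norm_def] at h2
    have h3 : ‖G₂^[u (φ n)] z₂‖ < max M (C + 1) :=
      lt_of_le_of_lt (hC0 _) (lt_of_lt_of_le (lt_add_one C) (le_max_right _ _))
    have h4 : max M (C + 1) ≤ ‖G₁^[u (φ n)] w‖ := by
      by_contra h5
      push_neg at h5
      exact absurd h2 (not_le.2 (max_lt h5 h3))
    exact le_trans (le_max_left _ _) h4

/-- Symmetric version of `normal_fst_of_prod`. -/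
lemma normal_snd_of_prod {G₁ G₂ : ℂ → ℂ} {z₁ z₂ : ℂ}
    (hb : z₁ ∈ filledJuliaSet G₁)
    (h : (z₁, z₂) ∉ juliaSet (fun w : ℂ × ℂ => (G₁ w.1, G₂ w.2))) :
    z₂ ∉ juliaSet G₂ := by
  simp only [juliaSet, mem_setOf_eq, not_not] at *
  obtain ⟨U, hUo, hzU, hN⟩ := h
  have hb' : Bornology.IsBounded (Set.range fun n : ℕ => G₁^[n] z₁) := hb
  obtain ⟨C, hC⟩ := isBounded_iff_forall_norm_le.1 hb'
  have hC0 : ∀ n : ℕ, ‖G₁^[n] z₁‖ ≤ C := fun n => hC _ ⟨n, rfl⟩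
  have hcont : Continuous fun w : ℂ => ((z₁, w) : ℂ × ℂ) := continuous_const.prodMk continuous_id
  refine ⟨{w : ℂ | ((z₁, w) : ℂ × ℂ) ∈ U}, hUo.preimage hcont, hzU, ?_⟩
  intro u
  obtain ⟨φ, hφ, H⟩ := hN u
  refine ⟨φ, hφ, ?_⟩
  rcases H with ⟨f, hf⟩ | hdiv
  · left
    refine ⟨fun w => (f ((z₁, w) : ℂ × ℂ)).2, fun K hK hKc => ?_⟩
    have hK' : (fun w : ℂ => ((z₁, w) : ℂ × ℂ)) '' K ⊆ U := by
      rintro _ ⟨w, hw, rfl⟩; exact hK hw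
    have hKc' : IsCompact ((fun w : ℂ => ((z₁, w) : ℂ × ℂ)) '' K) := hKc.image hcont
    have hf' := hf _ hK' hKc'
    rw [Metric.tendstoUniformlyOn_iff] at hf' ⊢
    intro ε hε
    filter_upwards [hf' ε hε] with n hn w hw
    have h2 := hn ((z₁, w) : ℂ × ℂ) ⟨w, hw, rfl⟩
    rw [iterate_prod] at h2
    calc dist (f ((z₁, w) : ℂ × ℂ)).2 (G₂^[u (φ n)] w)
        ≤ dist (f ((z₁, w) : ℂ × ℂ))
            ((G₁^[u (φ n)] z₁, G₂^[u (φ n)] w) : ℂ × ℂ) := by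
          rw [Prod.dist_eq]; exact le_max_right _ _
      _ < ε := h2
  · right
    intro K hK hKc M hM
    have hK' : (fun w : ℂ => ((z₁, w) : ℂ × ℂ)) '' K ⊆ U := by
      rintro _ ⟨w, hw, rfl⟩; exact hK hw
    have hKc' : IsCompact ((fun w : ℂ => ((z₁, w) : ℂ × ℂ)) '' K) := hKc.image hcont
    have hM' : 0 < max M (C + 1) := lt_of_lt_of_le hM (le_max_left _ _)
    filter_upwards [hdiv _ hK' hKc' _ hM'] with n hn w hw
    have h2 := hn ((z₁, w) : ℂ × ℂ) ⟨w, hw, rfl⟩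
    rw [iterate_prod, Prod.norm_def] at h2
    have h3 : ‖G₁^[u (φ n)] z₁‖ < max M (C + 1) :=
      lt_of_le_of_lt (hC0 _) (lt_of_lt_of_le (lt_add_one C) (le_max_right _ _))
    have h4 : max M (C + 1) ≤ ‖G₂^[u (φ n)] w‖ := by
      by_contra h5
      push_neg at h5
      exact absurd h2 (not_le.2 (max_lt h3 h5))
    exact le_trans (le_max_left _ _) h4

end Aux

/-- For a non-degenerate bicomplex polynomial `F(w₁, w₂) = (q₁(w₁), q₂(w₂))` of degree `d ≥ 2`,
the bicomplex Julia set is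
`J₂(F) = (J(q₁) ×ˢ K(q₂)) ∪ (K(q₁) ×ˢ J(q₂))`,
where `J(p)` and `K(p)` are the Julia set and filled-in Julia set of a complex polynomial. -/
theorem stmt16 (q₁ q₂ : Polynomial ℂ) (d : ℕ) (hd : 2 ≤ d)
    (h₁ : q₁.natDegree = d) (h₂ : q₂.natDegree = d) :
    juliaSet (fun w : ℂ × ℂ => (q₁.eval w.1, q₂.eval w.2)) =
      (juliaSet (fun z : ℂ => q₁.eval z) ×ˢ filledJuliaSet (fun z : ℂ => q₂.eval z)) ∪
      (filledJuliaSet (fun z : ℂ => q₁.eval z) ×ˢ juliaSet (fun z : ℂ => q₂.eval z)) := by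
  have hd₁ : 2 ≤ q₁.natDegree := h₁ ▸ hd
  have hd₂ : 2 ≤ q₂.natDegree := h₂ ▸ hd
  ext ⟨z₁, z₂⟩
  simp only [Set.mem_union, Set.mem_prod]
  constructor
  · intro hJ
    by_contra hR
    push_neg at hR
    obtain ⟨hR1, hR2⟩ := hR
    by_cases hK₂ : z₂ ∈ filledJuliaSet (fun z : ℂ => q₂.eval z)
    · by_cases hK₁ : z₁ ∈ filledJuliaSet (fun z : ℂ => q₁.eval z)
      · exact not_julia_prod (fun hJ₁ => hR1 hJ₁ hK₂) (fun hJ₂ => hR2 hK₁ hJ₂) hJ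
      · exact not_julia_escape_fst q₁ hd₁ z₂ (fun z => q₂.eval z) hK₁ hJ
    · exact not_julia_escape_snd q₂ hd₂ z₁ (fun z => q₁.eval z) hK₂ hJ
  · intro hR
    rcases hR with ⟨hJ₁, hK₂⟩ | ⟨hK₁, hJ₂⟩
    · by_contra h
      exact normal_fst_of_prod hK₂ h hJ₁
    · by_contra h
      exact normal_snd_of_prod hK₁ h hJ₂
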